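/- Let z_1,...,z_k be pairwise distinct complex numbers with |z_i| ≤ 1, and let a_1,...,a_k be complex numbers such that Σ_{i=1}^k a_i z_i^m = δ_{m,k-1} for 0 ≤ m ≤ k-1. Let n ≥ k and set t(z) = Σ_{i=1}^k a_i (z - z_i)^n. Then every zero w of t satisfies |w| < 2(n-k+1)/ln 2. -/

import Mathlib

open Polynomial

/-- Key moment bound: if `Σ aᵢ zᵢᵐ = δ_{m,k}` for `m ≤ k` (with `k+1` nodes in the unit
disc), then `|Σ aᵢ zᵢᵖ| ≤ C(p, k)` for all `p ≥ k`. -/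
lemma s_moment_bound : ∀ (k : ℕ) (z a : Fin (k + 1) → ℂ),
    (∀ i, ‖z i‖ ≤ 1) →
    (∀ m : ℕ, m ≤ k → (∑ i, a i * z i ^ m) = if m = k then 1 else 0) →
    ∀ p : ℕ, k ≤ p → ‖∑ i, a i * z i ^ p‖ ≤ (p.choose k : ℝ) := by
  intro k
  induction k with
  | zero =>
    intro z a hz hv p hp
    have h0 : a 0 = 1 := by simpa using hv 0 le_rfl
    rw [Fin.sum_univ_one, h0, one_mul, Nat.choose_zero_right, Nat.cast_one, norm_pow]
    exact pow_le_one₀ (norm_nonneg _) (hz 0)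
  | succ k ih =>
    intro z a hz hv p hp
    -- peel off the last node
    set a' : Fin (k + 1) → ℂ :=
      fun i => a i.castSucc * (z i.castSucc - z (Fin.last (k + 1))) with ha'
    set z' : Fin (k + 1) → ℂ := fun i => z i.castSucc with hz'
    have key : ∀ q : ℕ, (∑ i, a' i * z' i ^ q) =
        (∑ i, a i * z i ^ (q + 1)) - z (Fin.last (k + 1)) * ∑ i, a i * z i ^ q := by
      intro q
      have h1 : (∑ i, a i * z i ^ (q + 1)) - z (Fin.last (k + 1)) * ∑ i, a i * z i ^ q
          = ∑ i : Fin (k + 2), a i * z i ^ q * (z i - z (Fin.last (k + 1))) := by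
        rw [Finset.mul_sum, ← Finset.sum_sub_distrib]
        exact Finset.sum_congr rfl fun i _ => by ring
      rw [h1, Fin.sum_univ_castSucc
        (f := fun i : Fin (k + 2) => a i * z i ^ q * (z i - z (Fin.last (k + 1)))),
        sub_self, mul_zero, add_zero]
      exact (Finset.sum_congr rfl fun i _ => by simp only [ha', hz']; ring).symm
    have hz1 : ∀ i, ‖z' i‖ ≤ 1 := fun i => hz _
    have hv1 : ∀ m : ℕ, m ≤ k → (∑ i, a' i * z' i ^ m) = if m = k then 1 else 0 := by
      intro m hm
      have h3 : m ≠ k + 1 := by omega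
      rw [key m, hv m (by omega), hv (m + 1) (by omega), if_neg h3, mul_zero, sub_zero]
      by_cases h : m = k
      · rw [if_pos (show m + 1 = k + 1 by omega), if_pos h]
      · rw [if_neg (show m + 1 ≠ k + 1 by omega), if_neg h]
    -- induction on p
    induction p, hp using Nat.le_induction with
    | base =>
      rw [hv (k + 1) le_rfl]
      simp
    | succ p hp ihp =>
      have hs : (∑ i, a i * z i ^ (p + 1)) =
          z (Fin.last (k + 1)) * (∑ i, a i * z i ^ p) + (∑ i, a' i * z' i ^ p) := by
        rw [key p]; ring
      have h1 : ‖∑ i, a' i * z' i ^ p‖ ≤ (p.choose k : ℝ) :=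
        ih z' a' hz1 hv1 p (by omega)
      have h2 : ‖z (Fin.last (k + 1)) * (∑ i, a i * z i ^ p)‖
          ≤ (p.choose (k + 1) : ℝ) := by
        rw [norm_mul]
        calc ‖z (Fin.last (k + 1))‖ * ‖∑ i, a i * z i ^ p‖
            ≤ 1 * (p.choose (k + 1) : ℝ) :=
              mul_le_mul (hz _) ihp (norm_nonneg _) zero_le_one
          _ = (p.choose (k + 1) : ℝ) := one_mul _
      calc ‖∑ i, a i * z i ^ (p + 1)‖
          ≤ ‖z (Fin.last (k + 1)) * (∑ i, a i * z i ^ p)‖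
            + ‖∑ i, a' i * z' i ^ p‖ := by
            rw [hs]; exact norm_add_le _ _
        _ ≤ (p.choose (k + 1) : ℝ) + (p.choose k : ℝ) := add_le_add h2 h1
        _ = ((p + 1).choose (k + 1) : ℝ) := by
            rw [Nat.choose_succ_succ p k]; push_cast; ring

/-- **Zeros of `t` are in the disc `|z| < 2(n-k+1)/ln 2`.** Let `z_1, …, z_k` be
pairwise distinct points of the closed unit disc, and `a_1, …, a_k` be such that
`Σ_{i=1}^k a_i z_i^m = δ_{m,k-1}` for `0 ≤ m ≤ k-1`. Let `n ≥ k` and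
`t(z) = Σ_{i=1}^k a_i (z-z_i)^n`. Then every zero `w` of `t` satisfies
`|w| < 2(n-k+1)/ln 2`. -/
theorem t_poly_zero_bound (k n : ℕ) (hk : 1 ≤ k) (hkn : k ≤ n)
    (z a : Fin k → ℂ) (hinj : Function.Injective z)
    (hz : ∀ i, ‖z i‖ ≤ 1)
    (hvdm : ∀ m : ℕ, m ≤ k - 1 →
      (∑ i, a i * z i ^ m) = if m = k - 1 then 1 else 0)
    (t : Polynomial ℂ) (ht : t = ∑ i, C (a i) * (X - C (z i)) ^ n) :
    ∀ w : ℂ, t.IsRoot w → ‖w‖ < 2 * ((n : ℝ) - k + 1) / Real.log 2 := by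
  obtain ⟨k', rfl⟩ : ∃ k', k = k' + 1 := ⟨k - 1, by omega⟩
  simp only [Nat.add_sub_cancel] at hvdm
  obtain ⟨d, rfl⟩ : ∃ d, n = k' + d := ⟨n - k', by omega⟩
  have hd1 : 1 ≤ d := by omega
  set n := k' + d with hn
  intro w hw
  by_contra hcon
  push_neg at hcon
  set R := ‖w‖ with hR
  have hcast : 2 * ((n : ℝ) - ((k' + 1 : ℕ) : ℝ) + 1) / Real.log 2
      = 2 * d / Real.log 2 := by rw [hn]; push_cast; ring
  rw [hcast] at hcon
  have hlog : (0 : ℝ) < Real.log 2 := Real.log_pos (by norm_num)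
  have hRpos : (0 : ℝ) < R := lt_of_lt_of_le (by positivity) hcon
  -- the analytic inequality: (R+1)^d < 2 * R^d
  have hexp : (R + 1) ^ d < 2 * R ^ d := by
    have h1 : (1 + 1 / R) ^ d ≤ Real.exp ((d : ℝ) / R) := by
      calc (1 + 1 / R) ^ d ≤ Real.exp (1 / R) ^ d := by
            refine pow_le_pow_left₀ (by positivity) ?_ d
            linarith [Real.add_one_le_exp (1 / R)]
        _ = Real.exp ((d : ℝ) / R) := by
            rw [← Real.exp_nat_mul]; congr 1; ring
    have h2 : (d : ℝ) / R ≤ Real.log 2 / 2 := by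
      rw [div_le_div_iff₀ hRpos (by norm_num : (0 : ℝ) < 2)]
      have h5 := mul_le_mul_of_nonneg_right hcon hlog.le
      rw [div_mul_cancel₀ _ hlog.ne'] at h5
      linarith
    have h3 : Real.exp ((d : ℝ) / R) < 2 := by
      calc Real.exp ((d : ℝ) / R) ≤ Real.exp (Real.log 2 / 2) := Real.exp_le_exp.2 h2
        _ < Real.exp (Real.log 2) := Real.exp_lt_exp.2 (by linarith)
        _ = 2 := Real.exp_log (by norm_num)
    have h4 : (1 + 1 / R) ^ d < 2 := lt_of_le_of_lt h1 h3
    have h5 : R + 1 = (1 + 1 / R) * R := by field_simp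
    calc (R + 1) ^ d = (1 + 1 / R) ^ d * R ^ d := by rw [h5, mul_pow]
      _ < 2 * R ^ d := mul_lt_mul_of_pos_right h4 (by positivity)
  -- expand t(w)
  set S : ℕ → ℂ := fun q => ∑ i, a i * z i ^ q with hS
  have heval : (∑ m ∈ Finset.range (n + 1),
      (-1 : ℂ) ^ (m + n) * (n.choose m : ℂ) * w ^ m * S (n - m)) = 0 := by
    have h0 : (∑ i, a i * (w - z i) ^ n) = 0 := by
      have h0' : t.eval w = 0 := hw
      rw [ht, eval_finset_sum] at h0'
      simpa only [eval_mul, eval_pow, eval_sub, eval_C, eval_X] using h0'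
    calc (∑ m ∈ Finset.range (n + 1),
          (-1 : ℂ) ^ (m + n) * (n.choose m : ℂ) * w ^ m * S (n - m))
        = ∑ m ∈ Finset.range (n + 1), ∑ i : Fin (k' + 1),
            a i * ((-1 : ℂ) ^ (m + n) * w ^ m * z i ^ (n - m) * (n.choose m : ℂ)) := by
          refine Finset.sum_congr rfl fun m _ => ?_
          simp only [hS]
          rw [Finset.mul_sum]
          exact Finset.sum_congr rfl fun i _ => by ring
      _ = ∑ i : Fin (k' + 1), a i * (w - z i) ^ n := by
          rw [Finset.sum_comm]
          refine Finset.sum_congr rfl fun i _ => ?_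
          rw [sub_pow, Finset.mul_sum]
      _ = 0 := h0
  -- the tail (m > d) vanishes
  have htail : ∀ m ∈ Finset.Ico (d + 1) (n + 1),
      (-1 : ℂ) ^ (m + n) * (n.choose m : ℂ) * w ^ m * S (n - m) = 0 := by
    intro m hm
    rw [Finset.mem_Ico] at hm
    have h1 : n - m ≤ k' := by omega
    have h2 : n - m ≠ k' := by omega
    have h3 : S (n - m) = 0 := by
      simp only [hS]; rw [hvdm (n - m) h1, if_neg h2]
    rw [h3, mul_zero]
  have hsplit : (∑ m ∈ Finset.range (d + 1),
      (-1 : ℂ) ^ (m + n) * (n.choose m : ℂ) * w ^ m * S (n - m)) = 0 := by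
    have h4 := Finset.sum_Ico_consecutive
      (fun m => (-1 : ℂ) ^ (m + n) * (n.choose m : ℂ) * w ^ m * S (n - m))
      (Nat.zero_le (d + 1)) (by omega : d + 1 ≤ n + 1)
    rw [Finset.sum_eq_zero htail, add_zero] at h4
    rw [Finset.range_eq_Ico, h4, ← Finset.range_eq_Ico, heval]
  -- isolate the main term m = d
  have hmain : S (n - d) = 1 := by
    rw [show n - d = k' from by omega]
    simp only [hS]
    rw [hvdm k' le_rfl, if_pos rfl]
  rw [Finset.sum_range_succ, hmain, mul_one] at hsplit
  have hiso : (-1 : ℂ) ^ (d + n) * (n.choose d : ℂ) * w ^ d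
      = -(∑ m ∈ Finset.range d,
          (-1 : ℂ) ^ (m + n) * (n.choose m : ℂ) * w ^ m * S (n - m)) := by
    linear_combination hsplit
  -- take absolute values
  have habs : ((n.choose d : ℝ)) * R ^ d
      ≤ ∑ m ∈ Finset.range d, (n.choose m : ℝ) * ((n - m).choose k' : ℝ) * R ^ m := by
    calc ((n.choose d : ℝ)) * R ^ d
        = ‖-(∑ m ∈ Finset.range d,
            (-1 : ℂ) ^ (m + n) * (n.choose m : ℂ) * w ^ m * S (n - m))‖ := by
          rw [← hiso]
          simp [norm_mul, norm_pow, Complex.norm_natCast, hR]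
      _ ≤ ∑ m ∈ Finset.range d, ‖(-1 : ℂ) ^ (m + n) * (n.choose m : ℂ) * w ^ m * S (n - m)‖ := by
          rw [norm_neg]
          exact norm_sum_le _ _
      _ ≤ ∑ m ∈ Finset.range d, (n.choose m : ℝ) * ((n - m).choose k' : ℝ) * R ^ m := by
          refine Finset.sum_le_sum fun m hm => ?_
          rw [Finset.mem_range] at hm
          have hSb : ‖S (n - m)‖ ≤ ((n - m).choose k' : ℝ) :=
            s_moment_bound k' z a hz hvdm (n - m) (by omega)
          have habs1 : ‖(-1 : ℂ) ^ (m + n) * (n.choose m : ℂ) * w ^ m * S (n - m)‖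
              = (n.choose m : ℝ) * R ^ m * ‖S (n - m)‖ := by
            simp [norm_mul, norm_pow, Complex.norm_natCast, hR]
          rw [habs1]
          calc (n.choose m : ℝ) * R ^ m * ‖S (n - m)‖
              ≤ (n.choose m : ℝ) * R ^ m * ((n - m).choose k' : ℝ) :=
                mul_le_mul_of_nonneg_left hSb (by positivity)
            _ = (n.choose m : ℝ) * ((n - m).choose k' : ℝ) * R ^ m := by ring
  -- combinatorial identity: C(n,m)·C(n-m,k') = C(n,k')·C(d,m) for m < d
  have hcomb : ∀ m ∈ Finset.range d,
      (n.choose m : ℝ) * ((n - m).choose k' : ℝ)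
        = (n.choose k' : ℝ) * (d.choose m : ℝ) := by
    intro m hm
    rw [Finset.mem_range] at hm
    have e0 : n.choose m * (n - m).choose k' = n.choose k' * d.choose m := by
      have e1 : n.choose m = n.choose (n - m) := by
        rw [Nat.choose_symm (show m ≤ n by omega)]
      have e2 := Nat.choose_mul (n := n) (show k' ≤ n - m by omega)
      have e3 : n - k' = d := by omega
      have e4 : n - m - k' = d - m := by omega
      have e5 : d.choose (d - m) = d.choose m := Nat.choose_symm (by omega)
      rw [e1, e2, e3, e4, e5]
    exact_mod_cast congrArg (Nat.cast : ℕ → ℝ) e0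
  have hsum : (∑ m ∈ Finset.range d, (n.choose m : ℝ) * ((n - m).choose k' : ℝ) * R ^ m)
      = (n.choose k' : ℝ) * ((R + 1) ^ d - R ^ d) := by
    have hb : (R + 1) ^ d
        = ∑ m ∈ Finset.range (d + 1), R ^ m * 1 ^ (d - m) * (d.choose m : ℝ) :=
      add_pow R 1 d
    rw [Finset.sum_range_succ] at hb
    simp only [one_pow, mul_one, Nat.choose_self, Nat.cast_one] at hb
    calc (∑ m ∈ Finset.range d, (n.choose m : ℝ) * ((n - m).choose k' : ℝ) * R ^ m)
        = ∑ m ∈ Finset.range d, (n.choose k' : ℝ) * ((d.choose m : ℝ) * R ^ m) := by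
          refine Finset.sum_congr rfl fun m hm => ?_
          rw [hcomb m hm]; ring
      _ = (n.choose k' : ℝ) * ∑ m ∈ Finset.range d, (d.choose m : ℝ) * R ^ m := by
          rw [Finset.mul_sum]
      _ = (n.choose k' : ℝ) * ((R + 1) ^ d - R ^ d) := by
          congr 1
          have : (∑ m ∈ Finset.range d, R ^ m * (d.choose m : ℝ)) = (R + 1) ^ d - R ^ d := by
            linarith [hb]
          rw [← this]
          exact Finset.sum_congr rfl fun m _ => by ring
  have hnd : n.choose d = n.choose k' := by
    rw [show d = n - k' from by omega]
    exact Nat.choose_symm (by omega)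
  rw [hsum, hnd] at habs
  have hpos : (0 : ℝ) < (n.choose k' : ℝ) := by
    exact_mod_cast Nat.choose_pos (show k' ≤ n by omega)
  nlinarith [mul_lt_mul_of_pos_left hexp hpos]
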